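/- Let G=(V,E,w) be a finite bipartite graph whose two color classes each have n ≥ 1 vertices, with positive integer edge weights. Let δ = 2^{−k} for some natural number k, with δ ≤ 1/√n. Let M be a matching and y:V→ℝ_{≥0} duals satisfying: (domination) y(u)+y(v) ≥ w(e) for every edge e=(u,v)∈E; (near tightness) y(u)+y(v) ≤ w(e)+δ for every matched edge e=(u,v)∈M; and (free vertex duals) y(u)=0 for every vertex u that is free with respect to M. Then w(M) ≥ w(M*) − nδ ≥ w(M*) − √n for any maximum weight matching M* of G. -/

import Mathlib

open scoped Classical

noncomputable def efin {V : Type*} [Fintype V] (e : Sym2 V) : Finset V :=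
  Finset.univ.filter (· ∈ e)

lemma mem_efin {V : Type*} [Fintype V] {e : Sym2 V} {v : V} : v ∈ efin e ↔ v ∈ e := by
  simp [efin]

lemma efin_mk {V : Type*} [Fintype V] [DecidableEq V] (u v : V) :
    efin (s(u, v)) = {u, v} := by
  ext x; simp [mem_efin, Sym2.mem_iff]

/-- A matching in the graph with edge set `E`: a subset of the edges, containing
no self-loops, in which distinct edges share no vertex. -/
def IsMatching {V : Type*} [Fintype V] [DecidableEq V]
    (E M : Finset (Sym2 V)) : Prop :=
  M ⊆ E ∧ (∀ e ∈ M, ¬ e.IsDiag) ∧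
    ∀ e₁ ∈ M, ∀ e₂ ∈ M, ∀ v : V, v ∈ e₁ → v ∈ e₂ → e₁ = e₂

lemma sum_efin {V : Type*} [Fintype V] [DecidableEq V]
    {E M : Finset (Sym2 V)} (hM : IsMatching E M) (y : V → ℝ) :
    ∑ e ∈ M, ∑ v ∈ efin e, y v = ∑ v ∈ M.biUnion efin, y v := by
  refine (Finset.sum_biUnion ?_).symm
  intro e₁ h₁ e₂ h₂ hne
  refine Finset.disjoint_left.2 fun v hv₁ hv₂ => hne ?_
  exact hM.2.2 e₁ h₁ e₂ h₂ v (mem_efin.1 hv₁) (mem_efin.1 hv₂)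

lemma card_le {V : Type*} [Fintype V] [DecidableEq V]
    (side : V → Bool) {n : ℕ}
    (hL : (Finset.univ.filter (fun v : V => side v = false)).card = n)
    {E M : Finset (Sym2 V)}
    (hbip : ∀ u v : V, s(u, v) ∈ E → side u ≠ side v)
    (hM : IsMatching E M) : M.card ≤ n := by
  classical
  rcases M.eq_empty_or_nonempty with rfl | ⟨e0, he0⟩
  · simp
  obtain ⟨a, b⟩ := e0.exists_rep
  haveI : Nonempty V := ⟨a.1⟩
  have hinj : ∀ e ∈ M, ∃ v, v ∈ e ∧ side v = false := by
    intro e he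
    induction e using Sym2.ind with
    | _ u v =>
      have hb := hbip u v (hM.1 he)
      cases hu : side u
      · exact ⟨u, Sym2.mem_mk_left u v, hu⟩
      · cases hv : side v
        · exact ⟨v, Sym2.mem_mk_right u v, hv⟩
        · exact absurd (hu.trans hv.symm) hb
  choose f hf1 hf2 using hinj
  have : M.card ≤ (Finset.univ.filter (fun v : V => side v = false)).card := by
    apply Finset.card_le_card_of_injOn (fun e => if h : e ∈ M then f e h else Classical.arbitrary V)
    · intro e he
      simp only [he, dif_pos, Finset.mem_filter, Finset.mem_univ, true_and]
      · simp only [Finset.mem_coe] at he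
        simpa [he] using hf2 e he
    · intro e₁ h₁ e₂ h₂ heq
      simp only [Finset.mem_coe] at h₁ h₂
      simp only [h₁, h₂, dif_pos] at heq
      exact hM.2.2 e₁ h₁ e₂ h₂ _ (hf1 e₁ h₁) (heq ▸ hf1 e₂ h₂)
  · omega

theorem stmt8 {V : Type*} [Fintype V] [DecidableEq V]
    (side : V → Bool) (n : ℕ) (hn : 1 ≤ n)
    (hL : (Finset.univ.filter (fun v : V => side v = false)).card = n)
    (hR : (Finset.univ.filter (fun v : V => side v = true)).card = n)
    (E : Finset (Sym2 V)) (w : Sym2 V → ℤ)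
    (hbip : ∀ u v : V, s(u, v) ∈ E → side u ≠ side v)
    (hw : ∀ e ∈ E, 1 ≤ w e)
    (δ : ℝ) (k : ℕ) (hδ : δ = 1 / 2 ^ k) (hδn : δ ≤ 1 / Real.sqrt n)
    (M : Finset (Sym2 V)) (hM : IsMatching E M)
    (y : V → ℝ) (hy : ∀ u : V, 0 ≤ y u)
    (hdom : ∀ u v : V, s(u, v) ∈ E → (w s(u, v) : ℝ) ≤ y u + y v)
    (htight : ∀ u v : V, s(u, v) ∈ M → y u + y v ≤ (w s(u, v) : ℝ) + δ)
    (hfree : ∀ v : V, (∀ e ∈ M, v ∉ e) → y v = 0)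
    (Mstar : Finset (Sym2 V)) (hMstar : IsMatching E Mstar)
    (hmax : ∀ M' : Finset (Sym2 V), IsMatching E M' →
      ∑ e ∈ M', (w e : ℝ) ≤ ∑ e ∈ Mstar, (w e : ℝ)) :
    (∑ e ∈ Mstar, (w e : ℝ)) - n * δ ≤ ∑ e ∈ M, (w e : ℝ) ∧
      (∑ e ∈ Mstar, (w e : ℝ)) - Real.sqrt n ≤ (∑ e ∈ Mstar, (w e : ℝ)) - n * δ := by
  have hδpos : 0 ≤ δ := by rw [hδ]; positivity
  -- step 1: w(M*) ≤ ∑_{e∈M*} ∑_{v∈e} y v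
  have step1 : ∑ e ∈ Mstar, (w e : ℝ) ≤ ∑ e ∈ Mstar, ∑ v ∈ efin e, y v := by
    apply Finset.sum_le_sum
    intro e he
    induction e using Sym2.ind with
    | _ u v =>
      have hne : u ≠ v := by
        have := hMstar.2.1 _ he
        simpa [Sym2.isDiag_iff_proj_eq] using this
      rw [efin_mk, Finset.sum_pair hne]
      exact hdom u v (hMstar.1 he)
  -- step 2: ≤ ∑_{v∈univ} y v
  have step2 : ∑ e ∈ Mstar, ∑ v ∈ efin e, y v ≤ ∑ v, y v := by
    rw [sum_efin hMstar]
    exact Finset.sum_le_sum_of_subset_of_nonneg (Finset.subset_univ _) fun v _ _ => hy v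
  -- step 3: ∑_{v∈univ} y v = ∑ over covered by M
  have step3 : ∑ v, y v = ∑ e ∈ M, ∑ v ∈ efin e, y v := by
    rw [sum_efin hM]
    symm
    apply Finset.sum_subset (Finset.subset_univ _)
    intro v _ hv
    apply hfree
    intro e he hve
    exact hv (Finset.mem_biUnion.2 ⟨e, he, mem_efin.2 hve⟩)
  -- step 4: ≤ w(M) + |M| δ
  have step4 : ∑ e ∈ M, ∑ v ∈ efin e, y v ≤ (∑ e ∈ M, (w e : ℝ)) + M.card * δ := by
    have : ∑ e ∈ M, ∑ v ∈ efin e, y v ≤ ∑ e ∈ M, ((w e : ℝ) + δ) := by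
      apply Finset.sum_le_sum
      intro e he
      induction e using Sym2.ind with
      | _ u v =>
        have hne : u ≠ v := by
          have := hM.2.1 _ he
          simpa [Sym2.isDiag_iff_proj_eq] using this
        rw [efin_mk, Finset.sum_pair hne]
        exact htight u v he
    simpa [Finset.sum_add_distrib, mul_comm] using this
  have hcard : (M.card : ℝ) ≤ n := by
    exact_mod_cast card_le side hL hbip hM
  have main : ∑ e ∈ Mstar, (w e : ℝ) ≤ (∑ e ∈ M, (w e : ℝ)) + n * δ := by
    calc ∑ e ∈ Mstar, (w e : ℝ) ≤ ∑ v, y v := le_trans step1 step2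
    _ = ∑ e ∈ M, ∑ v ∈ efin e, y v := step3
    _ ≤ (∑ e ∈ M, (w e : ℝ)) + M.card * δ := step4
    _ ≤ (∑ e ∈ M, (w e : ℝ)) + n * δ := by gcongr
  constructor
  · linarith
  · have hsq : 0 < Real.sqrt n := Real.sqrt_pos.2 (by exact_mod_cast hn)
    have : (n : ℝ) * δ ≤ n * (1 / Real.sqrt n) := by
      gcongr
    have h2 : (n : ℝ) * (1 / Real.sqrt n) = Real.sqrt n := by
      rw [mul_one_div, div_eq_iff hsq.ne', Real.mul_self_sqrt (by positivity)]
    linarith
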